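/- Let Ā be symmetric positive definite, α ≥ 0, β > 0, and let f(A) = α(ĀA + AĀ − 2A²) + β(Ā − A). Then for any symmetric positive semidefinite A, ⟨f(A), A − Ā⟩_F ≤ −β‖A − Ā‖_F². Consequently, any solution of Ȧ = f(A) with A(0) symmetric positive semidefinite satisfies ‖A(t) − Ā‖_F² ≤ e^{−2βt}‖A(0) − Ā‖_F². -/

import Mathlib

open Matrix

attribute [local instance] Matrix.normedAddCommGroup Matrix.normedSpace

lemma trace_nonneg'_aux {d : ℕ} {M : Matrix (Fin d) (Fin d) ℝ} (hM : M.PosSemidef) :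
    0 ≤ M.trace := by
  rw [Matrix.trace]
  apply Finset.sum_nonneg
  intro i _
  have := hM.dotProduct_mulVec_nonneg (Pi.single i 1)
  simpa [dotProduct, Matrix.mulVec, Pi.single_apply, Finset.sum_ite_eq',
    Finset.sum_ite_eq] using this

theorem decay_of_precision (d : ℕ) (Abar : Matrix (Fin d) (Fin d) ℝ)
    (hAbar : Abar.PosDef) (α β : ℝ) (hα : 0 ≤ α) (hβ : 0 < β)
    (f : Matrix (Fin d) (Fin d) ℝ → Matrix (Fin d) (Fin d) ℝ)
    (hf : ∀ A, f A = α • (Abar * A + A * Abar - 2 • (A * A)) + β • (Abar - A)) :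
    (∀ A : Matrix (Fin d) (Fin d) ℝ, A.PosSemidef →
      ((f A)ᵀ * (A - Abar)).trace ≤ -β * ((A - Abar)ᵀ * (A - Abar)).trace) ∧
    (∀ A : ℝ → Matrix (Fin d) (Fin d) ℝ,
      (∀ t, (A t).PosSemidef) →
      (∀ t, HasDerivAt A (f (A t)) t) →
      ∀ t, 0 ≤ t →
        ((A t - Abar)ᵀ * (A t - Abar)).trace ≤
          Real.exp (-(2 * β) * t) * ((A 0 - Abar)ᵀ * (A 0 - Abar)).trace) := by
  have part1 : ∀ A : Matrix (Fin d) (Fin d) ℝ, A.PosSemidef →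
      ((f A)ᵀ * (A - Abar)).trace ≤ -β * ((A - Abar)ᵀ * (A - Abar)).trace := by
    intro A hA
    have hAT : Aᵀ = A := by
      rw [← conjTranspose_eq_transpose_of_trivial]; exact hA.1
    have hBT : Abarᵀ = Abar := by
      rw [← conjTranspose_eq_transpose_of_trivial]; exact hAbar.1
    set E := A - Abar with hE
    have hET : Eᵀ = E := by rw [hE, transpose_sub, hAT, hBT]
    have hTpos : 0 ≤ (Eᵀ * A * E).trace := by
      apply trace_nonneg'_aux
      have := hA.conjTranspose_mul_mul_same E
      rwa [conjTranspose_eq_transpose_of_trivial] at this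
    have h1 : (f A)ᵀ * E = α • (-(A*E+E*A) * E) + β • (-(Eᵀ*E)) := by
      rw [hf]
      have h2 : (Abar * A + A * Abar - 2 • (A * A))ᵀ = -(A*E+E*A) := by
        rw [transpose_sub, transpose_add, transpose_mul, transpose_mul, transpose_smul,
          transpose_mul, hAT, hBT, hE]
        noncomm_ring
      have h3 : (Abar - A)ᵀ = -E := by
        rw [transpose_sub, hAT, hBT, hE]; noncomm_ring
      rw [transpose_add, transpose_smul, transpose_smul, h2, h3, add_mul,
        smul_mul_assoc, smul_mul_assoc, hET]
      simp [neg_mul]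
    have h4 : ((A*E+E*A) * E).trace = 2 * (Eᵀ * A * E).trace := by
      rw [hET, add_mul, trace_add]
      rw [show A*E*E = (A*E)*E from rfl, trace_mul_comm (A*E) E, ← mul_assoc]
      ring
    have h5 : ((f A)ᵀ * E).trace = -(2*α) * (Eᵀ * A * E).trace - β * (Eᵀ*E).trace := by
      rw [h1, trace_add, trace_smul, trace_smul, neg_mul, trace_neg, trace_neg, h4,
        smul_eq_mul, smul_eq_mul]
      ring
    rw [h5]
    nlinarith [mul_nonneg hα hTpos]
  refine ⟨part1, ?_⟩
  intro A hApsd hAderiv t ht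
  set g : ℝ → ℝ := fun s => ((A s - Abar)ᵀ * (A s - Abar)).trace with hgdef
  set D : ℝ → ℝ := fun s => ∑ i, ∑ j,
    (f (A s) j i * (A s j i - Abar j i) + (A s j i - Abar j i) * f (A s) j i) with hDdef
  have hEntry : ∀ (i j : Fin d) (s : ℝ), HasDerivAt (fun u => A u i j) (f (A s) i j) s := by
    intro i j s
    let L : Matrix (Fin d) (Fin d) ℝ →L[ℝ] ℝ := LinearMap.toContinuousLinearMap
      { toFun := fun M => M i j, map_add' := fun _ _ => rfl, map_smul' := fun _ _ => rfl }
    exact L.hasFDerivAt.comp_hasDerivAt s (hAderiv s)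
  have hgeq : ∀ s, g s = ∑ i, ∑ j, (A s j i - Abar j i) * (A s j i - Abar j i) := by
    intro s
    simp [hgdef, Matrix.trace, Matrix.diag, Matrix.mul_apply, Matrix.transpose_apply,
      Matrix.sub_apply]
  have hg' : ∀ s, HasDerivAt g (D s) s := by
    intro s
    have h := HasDerivAt.fun_sum (fun i (_ : i ∈ Finset.univ) =>
      HasDerivAt.fun_sum (fun j (_ : j ∈ Finset.univ) =>
        (((hEntry j i s).sub_const (Abar j i)).mul ((hEntry j i s).sub_const (Abar j i)))))
    have hfun : g = fun u => ∑ i, ∑ j, (A u j i - Abar j i) * (A u j i - Abar j i) :=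
      funext hgeq
    rw [hfun]
    exact h
  have hDeq : ∀ s, D s = 2 * ((f (A s))ᵀ * (A s - Abar)).trace := by
    intro s
    simp [hDdef, Matrix.trace, Matrix.diag, Matrix.mul_apply, Matrix.transpose_apply,
      Matrix.sub_apply, Finset.mul_sum, two_mul, ← Finset.sum_add_distrib, mul_comm]
    exact Finset.sum_congr rfl fun i _ => Finset.sum_congr rfl fun j _ => by ring
  have hDle : ∀ s, D s ≤ -(2*β) * g s := by
    intro s
    have := part1 (A s) (hApsd s)
    rw [hDeq s]
    have hgs : g s = ((A s - Abar)ᵀ * (A s - Abar)).trace := rfl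
    nlinarith [this]
  set h : ℝ → ℝ := fun s => g s * Real.exp (2*β*s) with hhdef
  have hh : ∀ s, HasDerivAt h (D s * Real.exp (2*β*s) + g s * (Real.exp (2*β*s) * (2*β))) s := by
    intro s
    exact (hg' s).mul (by simpa using ((hasDerivAt_id s).const_mul (2*β)).exp)
  have hanti : Antitone h := by
    apply antitone_of_deriv_nonpos (fun s => (hh s).differentiableAt)
    intro s
    rw [(hh s).deriv]
    have h1 : D s + 2*β*g s ≤ 0 := by linarith [hDle s]
    have h2 : (D s + 2*β*g s) * Real.exp (2*β*s) ≤ 0 :=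
      mul_nonpos_of_nonpos_of_nonneg h1 (Real.exp_pos _).le
    nlinarith [h2]
  have hle : h t ≤ h 0 := hanti ht
  have h0 : h 0 = g 0 := by simp [hhdef]
  show g t ≤ Real.exp (-(2 * β) * t) * g 0
  rw [show (-(2*β)*t) = -(2*β*t) by ring, Real.exp_neg, inv_mul_eq_div,
    le_div_iff₀ (Real.exp_pos _)]
  calc g t * Real.exp (2*β*t) = h t := rfl
    _ ≤ h 0 := hle
    _ = g 0 := h0
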